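/- Let n, k, p be natural numbers with k ≤ n and 0 ≤ n − k < p ≤ n. Then p divides lcm(k) · C(n, k) in ℕ. -/

import Mathlib

/-- `ulcm k` is the least common multiple of `1, 2, …, k`, with `ulcm 0 = 1`. -/
def ulcm (k : ℕ) : ℕ := (Finset.Icc 1 k).lcm id

/-- `mu m` is the largest prime power dividing `m`. -/
def mu (m : ℕ) : ℕ := m.primeFactors.sup fun p => p ^ m.factorization p

/-- `f : ZMod n → ZMod m` is congruence preserving. -/
def CongPres (n m : ℕ) (f : ZMod n → ZMod m) : Prop :=
  ∀ d : ℕ, ∀ hd : d ∣ m, ∀ a b : ℕ, a < n → b < n → a ≡ b [MOD d] →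
    ZMod.castHom hd (ZMod d) (f a) = ZMod.castHom hd (ZMod d) (f b)

/-- `CP n m` is the number of congruence preserving functions `ZMod n → ZMod m`. -/
noncomputable def CP (n m : ℕ) : ℕ := Nat.card {f : ZMod n → ZMod m // CongPres n m f}

theorem stmt_2 (n k p : ℕ) (hkn : k ≤ n) (h1 : n - k < p) (h2 : p ≤ n) :
    p ∣ ulcm k * Nat.choose n k := by
  have hk1 : 1 ≤ k := by omega
  have hp0 : p ≠ 0 := by omega
  have hlcm0 : ulcm k ≠ 0 := by
    rw [ulcm, Ne, Finset.lcm_eq_zero_iff]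
    rintro ⟨x, hx, hx0⟩
    simp only [id_eq] at hx0
    rw [hx0] at hx
    simp at hx
  have hch0 : Nat.choose n k ≠ 0 := (Nat.choose_pos hkn).ne'
  rw [← Nat.factorization_le_iff_dvd hp0 (Nat.mul_ne_zero hlcm0 hch0),
    Nat.factorization_mul hlcm0 hch0, Finsupp.le_def]
  intro q
  by_cases hq : q.Prime
  · simp only [Finsupp.coe_add, Pi.add_apply]
    set e := p.factorization q with he
    set L := Nat.log q k with hL
    have hLlcm : L ≤ (ulcm k).factorization q := by
      rw [← Nat.Prime.pow_dvd_iff_le_factorization hq hlcm0]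
      have hqL : q ^ L ≤ k := Nat.pow_log_le_self q (by omega)
      have : q ^ L ∈ Finset.Icc 1 k := by
        simp [Nat.one_le_iff_ne_zero, pow_ne_zero _ hq.pos.ne', hqL, hq.ne_zero]
      exact Finset.dvd_lcm (f := id) this
    rcases le_or_gt e L with h | hLe
    · omega
    · have hqep : q ^ e ∣ p := Nat.ordProj_dvd p q
      have hqen : q ^ e ≤ n := le_trans (Nat.le_of_dvd (by omega) hqep) h2
      have hen : e ≤ n := le_trans (Nat.lt_pow_self (n := e) hq.one_lt).le hqen
      have hkey : e - L ≤ (Nat.choose n k).factorization q := by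
        rw [← Nat.Prime.pow_dvd_iff_le_factorization hq hch0,
          pow_dvd_iff_le_emultiplicity,
          hq.emultiplicity_choose hkn (b := n + 1)
            (Nat.lt_succ_of_le (Nat.log_le_self q n))]
        rw [Nat.cast_le]
        calc e - L = (Finset.Icc (L + 1) e).card := by
              rw [Nat.card_Icc]; omega
          _ ≤ _ := by
            apply Finset.card_le_card
            intro i hi
            simp only [Finset.mem_Icc] at hi
            simp only [Finset.mem_filter, Finset.mem_Ico]
            refine ⟨⟨by omega, by omega⟩, ?_⟩
            have hki : k < q ^ i := lt_of_lt_of_le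
              (Nat.lt_pow_succ_log_self hq.one_lt k)
              (Nat.pow_le_pow_right hq.pos (by omega))
            have hkmod : k % q ^ i = k := Nat.mod_eq_of_lt hki
            rw [hkmod]
            -- q^i ∣ p
            have hqip : q ^ i ∣ p := dvd_trans (pow_dvd_pow q hi.2) hqep
            obtain ⟨m, hm⟩ := hqip
            set Q := q ^ i with hQ
            set d := (n - k) / Q with hd
            set r := (n - k) % Q with hr
            have h5 : Q * d + r = n - k := Nat.div_add_mod (n - k) Q
            have hrQ : r < Q := Nat.mod_lt _ (pow_pos hq.pos i)
            have hdm : d < m := by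
              have : Q * d < Q * m := by omega
              exact lt_of_mul_lt_mul_left this (Nat.zero_le Q)
            have h6 : Q * (d + 1) ≤ Q * m := Nat.mul_le_mul_left Q hdm
            have h7 : Q * (d + 1) = Q * d + Q := by ring
            omega
      omega
  · simp [Nat.factorization_eq_zero_of_not_prime p hq]
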